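/- Suppose the digraph of W is quasi-strongly connected and all edge weights are nonnegative (W k l ≥ 0 for all k, l). Then for every nominal prescribed-time trajectory X with parameters ρ1, ρ2 > 0 and prescribed time T1 > 0, there exists c ∈ ℝ such that X t k = c for all nodes k and all t ≥ T1 (prescribed-time consensus within the preassigned time T1). -/

import Mathlib

open Matrix

/-- Time-varying gain: `μ_T(t) = κ/(T − t)` for `0 ≤ t < T`, `0` otherwise. -/
noncomputable def gain (κ T t : ℝ) : ℝ := if 0 ≤ t ∧ t < T then κ / (T - t) else 0

/-- Signed Laplacian `L = D − W` with `D k k = ∑_l |W k l|`. -/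
noncomputable def sLap {N : ℕ} (W : Matrix (Fin N) (Fin N) ℝ) : Matrix (Fin N) (Fin N) ℝ :=
  Matrix.diagonal (fun k => ∑ l, |W k l|) - W

/-- Node `i` reaches node `j`: reflexive–transitive closure of the edge relation
`E i j ↔ W j i ≠ 0`. -/
def Reaches {N : ℕ} (W : Matrix (Fin N) (Fin N) ℝ) : Fin N → Fin N → Prop :=
  Relation.ReflTransGen (fun i j => W j i ≠ 0)

def StronglyConnected {N : ℕ} (W : Matrix (Fin N) (Fin N) ℝ) : Prop :=
  ∀ i j, Reaches W i j

def QuasiStronglyConnected {N : ℕ} (W : Matrix (Fin N) (Fin N) ℝ) : Prop :=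
  ∃ r, ∀ j, Reaches W r j

def WeaklyConnected {N : ℕ} (W : Matrix (Fin N) (Fin N) ℝ) : Prop :=
  ∀ i j, Relation.ReflTransGen (fun a b => W b a ≠ 0 ∨ W a b ≠ 0) i j

/-- `k` is a leader: every node reaching `k` is reached back by `k`. -/
def IsLeader {N : ℕ} (W : Matrix (Fin N) (Fin N) ℝ) (k : Fin N) : Prop :=
  ∀ j, Reaches W j k → Reaches W k j

/-- Closed strong component of a leader `k`. -/
def CSC {N : ℕ} (W : Matrix (Fin N) (Fin N) ℝ) (k : Fin N) : Set (Fin N) :=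
  {j | Reaches W j k ∧ Reaches W k j}

/-- A gauge for a node set `S`. -/
def IsGauge {N : ℕ} (W : Matrix (Fin N) (Fin N) ℝ) (S : Set (Fin N)) (g : Fin N → ℝ) : Prop :=
  (∀ k ∈ S, g k = 1 ∨ g k = -1) ∧ ∀ k ∈ S, ∀ l ∈ S, g k * W k l * g l = |W k l|

/-- Nominal prescribed-time trajectory of the protocol (4). -/
def NominalTraj {N : ℕ} (W : Matrix (Fin N) (Fin N) ℝ) (κ ρ1 ρ2 T1 : ℝ)
    (X : ℝ → Fin N → ℝ) : Prop :=
  Continuous X ∧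
  ∀ t : ℝ, 0 ≤ t → t ≠ T1 →
    HasDerivAt X ((-(ρ1 + ρ2 * gain κ T1 t)) • (sLap W).mulVec (X t)) t

section PTCAuxAll
open NormedSpace Filter Finset

section PTCAux

attribute [local instance] Matrix.linftyOpNormedAddCommGroup Matrix.linftyOpNormedRing
  Matrix.linftyOpNormedAlgebra

variable {N : ℕ}

/-- Entry evaluation as a continuous linear map. -/
noncomputable def entryCLM (i j : Fin N) : Matrix (Fin N) (Fin N) ℝ →L[ℝ] ℝ :=
  LinearMap.toContinuousLinearMap
    { toFun := fun A => A i j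
      map_add' := fun _ _ => rfl
      map_smul' := fun _ _ => rfl }

@[simp] theorem entryCLM_apply (i j : Fin N) (A : Matrix (Fin N) (Fin N) ℝ) :
    entryCLM i j A = A i j := rfl

/-- `A ↦ A *ᵥ x0` as a continuous linear map. -/
noncomputable def mvCLM (x0 : Fin N → ℝ) : Matrix (Fin N) (Fin N) ℝ →L[ℝ] (Fin N → ℝ) :=
  LinearMap.toContinuousLinearMap
    { toFun := fun A => A *ᵥ x0
      map_add' := fun A B => Matrix.add_mulVec A B x0
      map_smul' := fun c A => Matrix.smul_mulVec c A x0 }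

@[simp] theorem mvCLM_apply (x0 : Fin N → ℝ) (A : Matrix (Fin N) (Fin N) ℝ) :
    mvCLM x0 A = A *ᵥ x0 := rfl

theorem exp_entry (A : Matrix (Fin N) (Fin N) ℝ) (i j : Fin N) :
    exp A i j = ∑' n : ℕ, ((n.factorial : ℝ))⁻¹ * (A ^ n) i j := by
  have h := expSeries_summable' (𝕂 := ℝ) A
  have h2 := (entryCLM i j).map_tsum h
  rw [exp_eq_tsum ℝ]
  simpa using h2

theorem summable_exp_entry (A : Matrix (Fin N) (Fin N) ℝ) (i j : Fin N) :
    Summable fun n : ℕ => ((n.factorial : ℝ))⁻¹ * (A ^ n) i j := by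
  have h := expSeries_summable' (𝕂 := ℝ) A
  have := h.map (entryCLM i j) (entryCLM i j).continuous
  simpa [Function.comp_def] using this

theorem pow_entry_nonneg {A : Matrix (Fin N) (Fin N) ℝ} (hA : ∀ i j, 0 ≤ A i j) :
    ∀ (n : ℕ) (i j : Fin N), 0 ≤ (A ^ n) i j := by
  intro n
  induction n with
  | zero => intro i j; rw [pow_zero, Matrix.one_apply]; split <;> norm_num
  | succ n ih =>
    intro i j
    rw [pow_succ, Matrix.mul_apply]
    exact Finset.sum_nonneg fun l _ => mul_nonneg (ih i l) (hA l j)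

theorem exp_entry_nonneg {A : Matrix (Fin N) (Fin N) ℝ} (hA : ∀ i j, 0 ≤ A i j) (i j : Fin N) :
    0 ≤ exp A i j := by
  rw [exp_entry]
  exact tsum_nonneg fun n => mul_nonneg (by positivity) (pow_entry_nonneg hA n i j)

theorem le_exp_entry {A : Matrix (Fin N) (Fin N) ℝ} (hA : ∀ i j, 0 ≤ A i j) (m : ℕ) (i j : Fin N) :
    ((m.factorial : ℝ))⁻¹ * (A ^ m) i j ≤ exp A i j := by
  rw [exp_entry]
  exact Summable.le_tsum (summable_exp_entry A i j) m
    (fun n _ => mul_nonneg (by positivity) (pow_entry_nonneg hA n i j))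

end PTCAux

section PTCAux2

attribute [local instance] Matrix.linftyOpNormedAddCommGroup Matrix.linftyOpNormedRing
  Matrix.linftyOpNormedAlgebra

open NormedSpace

variable {N : ℕ}

/-- The flow matrix `P(u) = exp(-u L)`. -/
noncomputable def Pm (L : Matrix (Fin N) (Fin N) ℝ) (u : ℝ) : Matrix (Fin N) (Fin N) ℝ :=
  exp ((-u) • L)

theorem exp_real_smul_one (r : ℝ) :
    exp (r • (1 : Matrix (Fin N) (Fin N) ℝ)) = Real.exp r • (1 : Matrix (Fin N) (Fin N) ℝ) := by
  have h1 : r • (1 : Matrix (Fin N) (Fin N) ℝ) = algebraMap ℝ _ r :=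
    (Algebra.algebraMap_eq_smul_one r).symm
  have h2 : Real.exp r • (1 : Matrix (Fin N) (Fin N) ℝ) = algebraMap ℝ _ (Real.exp r) :=
    (Algebra.algebraMap_eq_smul_one _).symm
  rw [h1, h2, Real.exp_eq_exp_ℝ, algebraMap_exp_comm]
  rfl

/-- Decomposition `exp(-uL) = e^{-uc} • exp(uB)` with `B = c•1 - L`. -/
theorem Pm_eq (L : Matrix (Fin N) (Fin N) ℝ) (c u : ℝ) :
    Pm L u = Real.exp (-(u * c)) • exp (u • (c • (1 : Matrix (Fin N) (Fin N) ℝ) - L)) := by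
  set B : Matrix (Fin N) (Fin N) ℝ := c • (1 : Matrix (Fin N) (Fin N) ℝ) - L with hB
  have hsplit : (-u) • L = (-(u * c)) • (1 : Matrix (Fin N) (Fin N) ℝ) + u • B := by
    ext i j
    simp [hB, Matrix.smul_apply, Matrix.sub_apply, Matrix.add_apply, Matrix.one_apply]
    split_ifs <;> ring
  have hcomm : Commute ((-(u * c)) • (1 : Matrix (Fin N) (Fin N) ℝ)) (u • B) :=
    ((Commute.one_left (u • B)).smul_left _)
  rw [Pm, hsplit, Matrix.exp_add_of_commute _ _ hcomm, exp_real_smul_one, smul_mul_assoc, one_mul]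

theorem Pm_nonneg {L : Matrix (Fin N) (Fin N) ℝ} {c : ℝ}
    (hB : ∀ i j, 0 ≤ (c • (1 : Matrix (Fin N) (Fin N) ℝ) - L) i j)
    {u : ℝ} (hu : 0 ≤ u) (i j : Fin N) : 0 ≤ Pm L u i j := by
  rw [Pm_eq L c u]
  have h1 : ∀ i j, 0 ≤ (u • (c • (1 : Matrix (Fin N) (Fin N) ℝ) - L)) i j := fun i j =>
    mul_nonneg hu (hB i j)
  have := exp_entry_nonneg h1 i j
  simpa [Matrix.smul_apply] using mul_nonneg (Real.exp_nonneg _) this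

theorem Pm_mulVec_ones {L : Matrix (Fin N) (Fin N) ℝ}
    (hrow : L *ᵥ (fun _ => (1 : ℝ)) = 0) (u : ℝ) :
    Pm L u *ᵥ (fun _ => (1 : ℝ)) = fun _ => (1 : ℝ) := by
  set M : Matrix (Fin N) (Fin N) ℝ := (-u) • L with hM
  have hM1 : M *ᵥ (fun _ => (1 : ℝ)) = 0 := by
    rw [hM, Matrix.smul_mulVec, hrow, smul_zero]
  have hMn : ∀ n : ℕ, (M ^ (n + 1)) *ᵥ (fun _ => (1 : ℝ)) = 0 := by
    intro n
    rw [pow_succ, ← Matrix.mulVec_mulVec, hM1, Matrix.mulVec_zero]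
  have h := (mvCLM (fun _ => (1 : ℝ))).map_tsum (expSeries_summable' (𝕂 := ℝ) M)
  have hexp : Pm L u = exp M := rfl
  rw [Pm, ← hM, exp_eq_tsum ℝ]
  have : (mvCLM (fun _ => (1:ℝ))) (∑' n : ℕ, ((n.factorial : ℝ))⁻¹ • M ^ n)
      = ∑' n : ℕ, ((n.factorial : ℝ))⁻¹ • ((M ^ n) *ᵥ (fun _ => (1:ℝ))) := by
    simpa using h
  have h0 : (∑' n : ℕ, ((n.factorial : ℝ))⁻¹ • ((M ^ n) *ᵥ (fun _ => (1:ℝ))))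
      = fun _ => (1:ℝ) := by
    rw [tsum_eq_single 0]
    · simp [Matrix.one_mulVec]
    · intro n hn
      obtain ⟨m, rfl⟩ := Nat.exists_eq_succ_of_ne_zero hn
      rw [hMn m, smul_zero]
  calc (∑' n : ℕ, ((n.factorial : ℝ))⁻¹ • M ^ n) *ᵥ (fun _ => (1:ℝ))
      = (mvCLM (fun _ => (1:ℝ))) (∑' n : ℕ, ((n.factorial : ℝ))⁻¹ • M ^ n) := rfl
    _ = _ := by rw [this, h0]

theorem Pm_row_sum {L : Matrix (Fin N) (Fin N) ℝ}
    (hrow : L *ᵥ (fun _ => (1 : ℝ)) = 0) (u : ℝ) (k : Fin N) :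
    ∑ l, Pm L u k l = 1 := by
  have := congrFun (Pm_mulVec_ones hrow u) k
  simpa [Matrix.mulVec, dotProduct] using this

theorem Pm_add_mulVec (L : Matrix (Fin N) (Fin N) ℝ) (u v : ℝ) (x : Fin N → ℝ) :
    Pm L (u + v) *ᵥ x = Pm L v *ᵥ (Pm L u *ᵥ x) := by
  have hcomm : Commute ((-v) • L) ((-u) • L) :=
    (((Commute.refl L).smul_left (-v)).smul_right (-u))
  have : Pm L (u + v) = Pm L v * Pm L u := by
    rw [Pm, Pm, Pm, ← Matrix.exp_add_of_commute _ _ hcomm]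
    congr 1
    module
  rw [this, ← Matrix.mulVec_mulVec]

end PTCAux2

section PTCAux3

attribute [local instance] Matrix.linftyOpNormedAddCommGroup Matrix.linftyOpNormedRing
  Matrix.linftyOpNormedAlgebra

open NormedSpace

variable {N : ℕ}

theorem pow_pos_of_chain {B : Matrix (Fin N) (Fin N) ℝ} (hB : ∀ i j, 0 ≤ B i j) {r j : Fin N}
    (h : Relation.ReflTransGen (fun a b => 0 < B b a) r j) :
    ∃ m : ℕ, 0 < (B ^ m) j r := by
  induction h with
  | refl => exact ⟨0, by simp [Matrix.one_apply]⟩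
  | @tail b c hrb hbc ih =>
    obtain ⟨m, hm⟩ := ih
    refine ⟨m + 1, ?_⟩
    rw [pow_succ', Matrix.mul_apply]
    have hterm : 0 < B c b * (B ^ m) b r := mul_pos hbc hm
    have hle : B c b * (B ^ m) b r ≤ ∑ l, B c l * (B ^ m) l r :=
      Finset.single_le_sum (f := fun l => B c l * (B ^ m) l r)
        (fun l _ => mul_nonneg (hB c l) (pow_entry_nonneg hB m l r)) (Finset.mem_univ b)
    linarith

theorem Pm_one_pos {L : Matrix (Fin N) (Fin N) ℝ} {c : ℝ}
    (hB : ∀ i j, 0 ≤ (c • (1 : Matrix (Fin N) (Fin N) ℝ) - L) i j) {r j : Fin N}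
    (h : Relation.ReflTransGen
      (fun a b => 0 < (c • (1 : Matrix (Fin N) (Fin N) ℝ) - L) b a) r j) :
    0 < Pm L 1 j r := by
  set B : Matrix (Fin N) (Fin N) ℝ := c • (1 : Matrix (Fin N) (Fin N) ℝ) - L with hBdef
  obtain ⟨m, hm⟩ := pow_pos_of_chain hB h
  have h1 : (0:ℝ) < ((m.factorial : ℝ))⁻¹ * (B ^ m) j r := by
    have : (0:ℝ) < ((m.factorial : ℝ))⁻¹ := by positivity
    exact mul_pos this hm
  have h2 : ((m.factorial : ℝ))⁻¹ * (B ^ m) j r ≤ exp B j r := le_exp_entry hB m j r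
  have h3 : (0:ℝ) < exp B j r := lt_of_lt_of_le h1 h2
  have := Pm_eq L c 1
  rw [this]
  have hone : (1:ℝ) • B = B := one_smul _ _
  simp only [Matrix.smul_apply, hone, smul_eq_mul]
  exact mul_pos (Real.exp_pos _) (by simpa using h3)

/-- Derivative of the flow along a differentiable time-change. -/
theorem hasDerivAt_flow (L : Matrix (Fin N) (Fin N) ℝ) (x0 : Fin N → ℝ)
    (σ : ℝ → ℝ) (τ d : ℝ) (hσ : HasDerivAt σ d τ) :
    HasDerivAt (fun u => exp (σ u • L) *ᵥ x0)
      (d • (L *ᵥ (exp (σ τ • L) *ᵥ x0))) τ := by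
  have h1 : HasDerivAt (fun r : ℝ => exp (r • L)) (L * exp (σ τ • L)) (σ τ) :=
    hasDerivAt_exp_smul_const' L (σ τ)
  have h2 : HasDerivAt (fun u => exp (σ u • L)) (d • (L * exp (σ τ • L))) τ :=
    h1.scomp τ hσ
  have h3 := (mvCLM x0).hasFDerivAt.comp_hasDerivAt τ h2
  have : (mvCLM x0) (d • (L * exp (σ τ • L))) = d • (L *ᵥ (exp (σ τ • L) *ᵥ x0)) := by
    rw [_root_.map_smul]
    simp [Matrix.mulVec_mulVec]
  exact h3.congr_deriv this

theorem continuous_flow (L : Matrix (Fin N) (Fin N) ℝ) (x0 : Fin N → ℝ) :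
    Continuous (fun u : ℝ => Pm L u *ᵥ x0) := by
  have : ∀ τ : ℝ, ContinuousAt (fun u : ℝ => exp ((-u) • L) *ᵥ x0) τ := fun τ =>
    (hasDerivAt_flow L x0 (fun u => -u) τ (-1) (hasDerivAt_neg τ)).continuousAt
  exact continuous_iff_continuousAt.2 this

end PTCAux3

section PTCAux4

attribute [local instance] Matrix.linftyOpNormedAddCommGroup Matrix.linftyOpNormedRing
  Matrix.linftyOpNormedAlgebra

open NormedSpace Filter

variable {N : ℕ} [Nonempty (Fin N)]

/-- max of coordinates -/
noncomputable def Mx (z : Fin N → ℝ) : ℝ := Finset.univ.sup' Finset.univ_nonempty z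

noncomputable def mn (z : Fin N → ℝ) : ℝ := Finset.univ.inf' Finset.univ_nonempty z

theorem le_Mx (z : Fin N → ℝ) (k : Fin N) : z k ≤ Mx z :=
  Finset.le_sup' z (Finset.mem_univ k)

theorem mn_le (z : Fin N → ℝ) (k : Fin N) : mn z ≤ z k :=
  Finset.inf'_le z (Finset.mem_univ k)

theorem mn_le_Mx (z : Fin N → ℝ) : mn z ≤ Mx z :=
  le_trans (mn_le z (Classical.arbitrary _)) (le_Mx z _)

theorem mulVec_apply_eq (Q : Matrix (Fin N) (Fin N) ℝ) (z : Fin N → ℝ) (k : Fin N) :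
    (Q *ᵥ z) k = ∑ l, Q k l * z l := rfl

theorem stoch_upper {Q : Matrix (Fin N) (Fin N) ℝ} {k : Fin N}
    (h0 : ∀ l, 0 ≤ Q k l) (h1 : ∑ l, Q k l = 1) (z : Fin N → ℝ) :
    (Q *ᵥ z) k ≤ Mx z := by
  rw [mulVec_apply_eq]
  calc ∑ l, Q k l * z l ≤ ∑ l, Q k l * Mx z :=
        Finset.sum_le_sum fun l _ => mul_le_mul_of_nonneg_left (le_Mx z l) (h0 l)
    _ = (∑ l, Q k l) * Mx z := by rw [Finset.sum_mul]
    _ = Mx z := by rw [h1, one_mul]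

theorem stoch_lower {Q : Matrix (Fin N) (Fin N) ℝ} {k : Fin N}
    (h0 : ∀ l, 0 ≤ Q k l) (h1 : ∑ l, Q k l = 1) (z : Fin N → ℝ) :
    mn z ≤ (Q *ᵥ z) k := by
  rw [mulVec_apply_eq]
  calc mn z = (∑ l, Q k l) * mn z := by rw [h1, one_mul]
    _ = ∑ l, Q k l * mn z := by rw [Finset.sum_mul]
    _ ≤ ∑ l, Q k l * z l :=
        Finset.sum_le_sum fun l _ => mul_le_mul_of_nonneg_left (mn_le z l) (h0 l)

theorem stoch_upper_delta {Q : Matrix (Fin N) (Fin N) ℝ} {k r : Fin N} {δ : ℝ}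
    (h0 : ∀ l, 0 ≤ Q k l) (h1 : ∑ l, Q k l = 1) (hδ : δ ≤ Q k r) (z : Fin N → ℝ) :
    (Q *ᵥ z) k ≤ Mx z - δ * (Mx z - z r) := by
  rw [mulVec_apply_eq]
  have hsplit : ∑ l, Q k l * z l
      = Q k r * z r + ∑ l ∈ Finset.univ.erase r, Q k l * z l := by
    rw [← Finset.add_sum_erase _ _ (Finset.mem_univ r)]
  have hsum_er : ∑ l ∈ Finset.univ.erase r, Q k l = 1 - Q k r := by
    have := Finset.add_sum_erase Finset.univ (fun l => Q k l) (Finset.mem_univ r)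
    linarith [h1 ▸ this]
  have h2 : ∑ l ∈ Finset.univ.erase r, Q k l * z l
      ≤ ∑ l ∈ Finset.univ.erase r, Q k l * Mx z :=
    Finset.sum_le_sum fun l _ => mul_le_mul_of_nonneg_left (le_Mx z l) (h0 l)
  have h3 : ∑ l ∈ Finset.univ.erase r, Q k l * Mx z = (1 - Q k r) * Mx z := by
    rw [← Finset.sum_mul, hsum_er]
  have h4 : Q k r * (Mx z - z r) ≥ δ * (Mx z - z r) :=
    mul_le_mul_of_nonneg_right hδ (by linarith [le_Mx z r])
  calc ∑ l, Q k l * z l ≤ Q k r * z r + (1 - Q k r) * Mx z := by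
        rw [hsplit]; linarith [h2, h3]
    _ = Mx z - Q k r * (Mx z - z r) := by ring
    _ ≤ Mx z - δ * (Mx z - z r) := by linarith [h4]

theorem stoch_lower_delta {Q : Matrix (Fin N) (Fin N) ℝ} {k r : Fin N} {δ : ℝ}
    (h0 : ∀ l, 0 ≤ Q k l) (h1 : ∑ l, Q k l = 1) (hδ : δ ≤ Q k r) (z : Fin N → ℝ) :
    mn z + δ * (z r - mn z) ≤ (Q *ᵥ z) k := by
  rw [mulVec_apply_eq]
  have hsplit : ∑ l, Q k l * z l
      = Q k r * z r + ∑ l ∈ Finset.univ.erase r, Q k l * z l := by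
    rw [← Finset.add_sum_erase _ _ (Finset.mem_univ r)]
  have hsum_er : ∑ l ∈ Finset.univ.erase r, Q k l = 1 - Q k r := by
    have := Finset.add_sum_erase Finset.univ (fun l => Q k l) (Finset.mem_univ r)
    linarith [h1 ▸ this]
  have h2 : ∑ l ∈ Finset.univ.erase r, Q k l * mn z
      ≤ ∑ l ∈ Finset.univ.erase r, Q k l * z l :=
    Finset.sum_le_sum fun l _ => mul_le_mul_of_nonneg_left (mn_le z l) (h0 l)
  have h3 : ∑ l ∈ Finset.univ.erase r, Q k l * mn z = (1 - Q k r) * mn z := by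
    rw [← Finset.sum_mul, hsum_er]
  have h4 : δ * (z r - mn z) ≤ Q k r * (z r - mn z) :=
    mul_le_mul_of_nonneg_right hδ (by linarith [mn_le z r])
  calc mn z + δ * (z r - mn z) ≤ mn z + Q k r * (z r - mn z) := by linarith [h4]
    _ = Q k r * z r + (1 - Q k r) * mn z := by ring
    _ ≤ ∑ l, Q k l * z l := by rw [hsplit]; linarith [h2, h3]

end PTCAux4

section PTCAux5

attribute [local instance] Matrix.linftyOpNormedAddCommGroup Matrix.linftyOpNormedRing
  Matrix.linftyOpNormedAlgebra

open NormedSpace Filter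

variable {N : ℕ} [Nonempty (Fin N)]

theorem tendsto_consensus (L : Matrix (Fin N) (Fin N) ℝ) (x0 : Fin N → ℝ)
    (hnn : ∀ u : ℝ, 0 ≤ u → ∀ i j, 0 ≤ Pm L u i j)
    (hrs : ∀ (u : ℝ) (k : Fin N), ∑ l, Pm L u k l = 1)
    (r : Fin N) (hcol : ∀ j, 0 < Pm L 1 j r) :
    ∃ c : ℝ, Tendsto (fun u : ℝ => Pm L u *ᵥ x0) atTop (nhds (fun _ => c)) := by
  set y : ℝ → Fin N → ℝ := fun u => Pm L u *ᵥ x0 with hy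
  have hsemi : ∀ u v : ℝ, y (u + v) = Pm L v *ᵥ y u := fun u v => Pm_add_mulVec L u v x0
  -- monotonicity
  have hMx_mono : ∀ u v : ℝ, u ≤ v → Mx (y v) ≤ Mx (y u) := by
    intro u v huv
    have : y v = Pm L (v - u) *ᵥ y u := by
      have := hsemi u (v - u); rw [show u + (v - u) = v by ring] at this; exact this
    rw [this]
    exact Finset.sup'_le _ _ fun k _ =>
      stoch_upper (fun l => hnn _ (by linarith) k l) (hrs _ k) (y u)
  have hmn_mono : ∀ u v : ℝ, u ≤ v → mn (y u) ≤ mn (y v) := by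
    intro u v huv
    have : y v = Pm L (v - u) *ᵥ y u := by
      have := hsemi u (v - u); rw [show u + (v - u) = v by ring] at this; exact this
    rw [this]
    exact Finset.le_inf' _ _ fun k _ =>
      stoch_lower (fun l => hnn _ (by linarith) k l) (hrs _ k) (y u)
  -- contraction constant
  set δ : ℝ := Finset.univ.inf' Finset.univ_nonempty (fun j => Pm L 1 j r) with hδdef
  have hδ_le : ∀ j, δ ≤ Pm L 1 j r := fun j => Finset.inf'_le _ (Finset.mem_univ j)
  have hδ_pos : 0 < δ := by
    rw [hδdef, Finset.lt_inf'_iff]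
    exact fun j _ => hcol j
  have hδ_le_one : δ ≤ 1 := by
    have h1 := hδ_le r
    have h2 : Pm L 1 r r ≤ ∑ l, Pm L 1 r l :=
      Finset.single_le_sum (f := fun l => Pm L 1 r l)
        (fun l _ => hnn 1 zero_le_one r l) (Finset.mem_univ r)
    rw [hrs 1 r] at h2
    linarith
  -- one-step contraction
  have hcontract : ∀ u : ℝ,
      Mx (y (u + 1)) - mn (y (u + 1)) ≤ (1 - δ) * (Mx (y u) - mn (y u)) := by
    intro u
    have hstep : y (u + 1) = Pm L 1 *ᵥ y u := hsemi u 1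
    have hup : Mx (y (u + 1)) ≤ Mx (y u) - δ * (Mx (y u) - (y u) r) := by
      rw [hstep]
      exact Finset.sup'_le _ _ fun k _ =>
        stoch_upper_delta (fun l => hnn 1 zero_le_one k l) (hrs 1 k) (hδ_le k) (y u)
    have hlo : mn (y u) + δ * ((y u) r - mn (y u)) ≤ mn (y (u + 1)) := by
      rw [hstep]
      exact Finset.le_inf' _ _ fun k _ =>
        stoch_lower_delta (fun l => hnn 1 zero_le_one k l) (hrs 1 k) (hδ_le k) (y u)
    nlinarith [hup, hlo]
  -- geometric decay along naturals
  have hosc_nat : ∀ n : ℕ, Mx (y n) - mn (y n) ≤ (1 - δ) ^ n * (Mx (y 0) - mn (y 0)) := by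
    intro n
    induction n with
    | zero => simp
    | succ n ih =>
      have h1 : ((n + 1 : ℕ) : ℝ) = (n : ℝ) + 1 := by push_cast; ring
      rw [h1]
      calc Mx (y ((n : ℝ) + 1)) - mn (y ((n : ℝ) + 1))
          ≤ (1 - δ) * (Mx (y n) - mn (y n)) := hcontract n
        _ ≤ (1 - δ) * ((1 - δ) ^ n * (Mx (y 0) - mn (y 0))) :=
            mul_le_mul_of_nonneg_left ih (by linarith)
        _ = (1 - δ) ^ (n + 1) * (Mx (y 0) - mn (y 0)) := by ring
  -- the consensus value
  have hbdd : BddAbove (Set.range fun n : ℕ => mn (y n)) := by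
    refine ⟨Mx (y 0), ?_⟩
    rintro _ ⟨n, rfl⟩
    exact le_trans (mn_le_Mx _) (hMx_mono 0 n (Nat.cast_nonneg n))
  set c : ℝ := ⨆ n : ℕ, mn (y n) with hc
  have hmn_le_c : ∀ n : ℕ, mn (y n) ≤ c := fun n => le_ciSup hbdd n
  refine ⟨c, ?_⟩
  rw [tendsto_pi_nhds]
  intro k
  rw [Metric.tendsto_atTop]
  intro ε hε
  -- choose n1 for oscillation
  have htend : Tendsto (fun n : ℕ => (1 - δ) ^ n * (Mx (y 0) - mn (y 0))) atTop (nhds 0) := by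
    have h0 : Tendsto (fun n : ℕ => (1 - δ) ^ n) atTop (nhds 0) :=
      tendsto_pow_atTop_nhds_zero_of_lt_one (by linarith) (by linarith)
    simpa using h0.mul_const (Mx (y 0) - mn (y 0))
  obtain ⟨n1, hn1⟩ := (htend.eventually (gt_mem_nhds (half_pos hε))).exists_forall_of_atTop
  obtain ⟨n2, hn2⟩ : ∃ n2 : ℕ, c - ε / 2 < mn (y n2) := by
    obtain ⟨n2, hn2⟩ := exists_lt_of_lt_ciSup (show c - ε / 2 < c by linarith)
    exact ⟨n2, hn2⟩
  set n : ℕ := max n1 n2 with hn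
  refine ⟨(n : ℝ), fun u hu => ?_⟩
  have hcast : ((n : ℕ) : ℝ) ≥ (n2 : ℝ) := by
    exact_mod_cast Nat.cast_le.mpr (le_max_right n1 n2)
  have hlow : c - ε / 2 < mn (y u) := by
    have := hmn_mono n2 u (le_trans hcast hu)
    linarith
  have hosc : Mx (y n) - mn (y n) < ε / 2 := lt_of_le_of_lt (hosc_nat n)
    (hn1 n (le_max_left n1 n2))
  have hup : y u k < c + ε / 2 := by
    have h1 : y u k ≤ Mx (y u) := le_Mx _ k
    have h2 : Mx (y u) ≤ Mx (y n) := hMx_mono n u hu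
    have h3 : mn (y n) ≤ c := hmn_le_c n
    linarith
  have hlo2 : c - ε / 2 < y u k := lt_of_lt_of_le hlow (mn_le _ k)
  rw [Real.dist_eq, abs_sub_lt_iff]
  constructor <;> linarith

end PTCAux5

section PTCAux6

attribute [local instance] Matrix.linftyOpNormedAddCommGroup Matrix.linftyOpNormedRing
  Matrix.linftyOpNormedAlgebra

open NormedSpace Filter

variable {N : ℕ}

theorem Pm_zero (L : Matrix (Fin N) (Fin N) ℝ) : Pm L 0 = 1 := by
  simp [Pm, exp_zero]

theorem hasDerivAt_Pm_comp (L : Matrix (Fin N) (Fin N) ℝ) (x0 : Fin N → ℝ)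
    (σ : ℝ → ℝ) (τ d : ℝ) (hσ : HasDerivAt σ d τ) :
    HasDerivAt (fun u => Pm L (σ u) *ᵥ x0) ((-d) • (L *ᵥ (Pm L (σ τ) *ᵥ x0))) τ := by
  have h := hasDerivAt_flow L x0 (fun u => -(σ u)) τ (-d) hσ.neg
  simpa [Pm] using h

theorem continuous_Pm_entry (L : Matrix (Fin N) (Fin N) ℝ) (f : ℝ → ℝ) (hf : Continuous f)
    (k l : Fin N) : Continuous fun u => Pm L (f u) k l := by
  have h1 : Continuous fun u : ℝ => ((-u) • L : Matrix (Fin N) (Fin N) ℝ) :=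
    continuous_neg.smul continuous_const
  have h2 : Continuous fun u : ℝ => Pm L u := exp_continuous.comp h1
  have h3 : Continuous fun u : ℝ => entryCLM k l (Pm L u) := (entryCLM k l).continuous.comp h2
  exact (h3.comp hf)

theorem lipschitz_scaled (L : Matrix (Fin N) (Fin N) ℝ) {C m : ℝ} (h0 : 0 ≤ m) (hC : m ≤ C) :
    LipschitzWith (Real.toNNReal C * ‖(LinearMap.toContinuousLinearMap (Matrix.mulVecLin L))‖₊)
      (fun x => (-m) • (LinearMap.toContinuousLinearMap (Matrix.mulVecLin L)) x) := by
  set G := LinearMap.toContinuousLinearMap (Matrix.mulVecLin L) with hG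
  have h := ((-m) • G).lipschitz
  have heq : ⇑((-m) • G) = fun x => (-m) • G x := rfl
  rw [heq] at h
  refine h.weaken ?_
  rw [nnnorm_smul]
  have : ‖-m‖₊ ≤ Real.toNNReal C := by
    rw [← NNReal.coe_le_coe, coe_nnnorm, Real.norm_eq_abs, abs_neg, abs_of_nonneg h0,
      Real.coe_toNNReal C (le_trans h0 hC)]
    exact hC
  exact mul_le_mul_left this _

end PTCAux6
end PTCAuxAll

open Filter in
theorem prescribed_time_consensus_quasi_nonneg
    {N : ℕ} (hN : 2 ≤ N) (W : Matrix (Fin N) (Fin N) ℝ)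
    (hdiag : ∀ k, W k k = 0)
    (hQS : QuasiStronglyConnected W)
    (hpos : ∀ k l, 0 ≤ W k l)
    (κ ρ1 ρ2 T1 : ℝ) (hκ : 2 < κ) (hρ1 : 0 < ρ1) (hρ2 : 0 < ρ2) (hT1 : 0 < T1)
    (X : ℝ → Fin N → ℝ) (hX : NominalTraj W κ ρ1 ρ2 T1 X) :
    ∃ c : ℝ, ∀ t : ℝ, T1 ≤ t → ∀ k, X t k = c := by
  classical
  haveI : Nonempty (Fin N) := ⟨⟨0, by omega⟩⟩
  obtain ⟨hXc, hXd⟩ := hX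
  set L : Matrix (Fin N) (Fin N) ℝ := sLap W with hLdef
  set c0 : ℝ := ∑ k, ∑ l, |W k l| with hc0
  -- entrywise nonnegativity of B = c0•1 - L
  have hBnn : ∀ i j, 0 ≤ (c0 • (1 : Matrix (Fin N) (Fin N) ℝ) - L) i j := by
    intro i j
    by_cases h : i = j
    · subst h
      have h1 : ∑ l, |W i l| ≤ c0 :=
        Finset.single_le_sum (f := fun k => ∑ l, |W k l|)
          (fun k _ => Finset.sum_nonneg fun l _ => abs_nonneg _) (Finset.mem_univ i)
      simp [hLdef, sLap, Matrix.sub_apply, Matrix.smul_apply, Matrix.one_apply_eq,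
        Matrix.diagonal_apply_eq, hdiag i]
      linarith
    · simp [hLdef, sLap, Matrix.sub_apply, Matrix.smul_apply, Matrix.one_apply_ne h,
        Matrix.diagonal_apply_ne _ h]
      exact hpos i j
  -- zero row sums
  have hrow : L *ᵥ (fun _ => (1 : ℝ)) = 0 := by
    funext k
    have h1 : ∑ l, |W k l| = ∑ l, W k l :=
      Finset.sum_congr rfl fun l _ => abs_of_nonneg (hpos k l)
    simp [hLdef, sLap, Matrix.mulVec, dotProduct, Matrix.sub_apply,
      Matrix.diagonal_apply, Finset.sum_sub_distrib, Finset.sum_ite_eq, h1]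
  have hnn : ∀ u : ℝ, 0 ≤ u → ∀ i j, 0 ≤ Pm L u i j := fun u hu i j => Pm_nonneg hBnn hu i j
  have hrs : ∀ (u : ℝ) (k : Fin N), ∑ l, Pm L u k l = 1 := fun u k => Pm_row_sum hrow u k
  obtain ⟨r, hr⟩ := hQS
  have hcol : ∀ j, 0 < Pm L 1 j r := by
    intro j
    refine Pm_one_pos hBnn (Relation.ReflTransGen.mono ?_ _ _ (hr j))
    intro a b hW
    have hne : b ≠ a := fun h => hW (h ▸ hdiag a)
    have heq : (c0 • (1 : Matrix (Fin N) (Fin N) ℝ) - L) b a = W b a := by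
      simp [hLdef, sLap, Matrix.sub_apply, Matrix.smul_apply, Matrix.one_apply_ne hne,
        Matrix.diagonal_apply_ne _ hne]
    rw [heq]
    exact lt_of_le_of_ne (hpos b a) (Ne.symm hW)
  obtain ⟨c, hctend⟩ := tendsto_consensus L (X 0) hnn hrs r hcol
  set y : ℝ → Fin N → ℝ := fun u => Pm L u *ᵥ X 0 with hydef
  -- the time rescaling
  set s : ℝ → ℝ := fun τ => ρ1 * τ + ρ2 * κ * (Real.log T1 - Real.log (T1 - τ)) with hsdef
  have hs0 : s 0 = 0 := by simp [hsdef]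
  have hs_deriv : ∀ τ : ℝ, τ < T1 → HasDerivAt s (ρ1 + ρ2 * (κ / (T1 - τ))) τ := by
    intro τ hτ
    have hposd : (0:ℝ) < T1 - τ := by linarith
    have h1 : HasDerivAt (fun x : ℝ => T1 - x) (-1) τ := by
      simpa using (hasDerivAt_id τ).const_sub T1
    have h2 : HasDerivAt (fun x : ℝ => Real.log (T1 - x)) ((T1 - τ)⁻¹ * (-1)) τ :=
      (Real.hasDerivAt_log (ne_of_gt hposd)).comp τ h1
    have h3 : HasDerivAt (fun x : ℝ => ρ1 * x) (ρ1 * 1) τ := (hasDerivAt_id τ).const_mul ρ1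
    have h4 := h3.add (((hasDerivAt_const τ (Real.log T1)).sub h2).const_mul (ρ2 * κ))
    refine h4.congr_deriv ?_
    field_simp
    ring
  have hgain_eq : ∀ τ : ℝ, 0 ≤ τ → τ < T1 → gain κ T1 τ = κ / (T1 - τ) := by
    intro τ h0 h1; simp [gain, h0, h1]
  have hgain_nonneg : ∀ τ : ℝ, 0 ≤ gain κ T1 τ := by
    intro τ
    unfold gain
    split
    · next h => exact div_nonneg (by linarith) (by linarith [h.2])
    · exact le_refl 0
  have hy_deriv : ∀ τ : ℝ, τ < T1 →
      HasDerivAt (fun u => y (s u))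
        ((-(ρ1 + ρ2 * (κ / (T1 - τ)))) • (L *ᵥ y (s τ))) τ := by
    intro τ hτ
    exact hasDerivAt_Pm_comp L (X 0) s τ (ρ1 + ρ2 * (κ / (T1 - τ))) (hs_deriv τ hτ)

  -- Step A: identify X with the rescaled flow on [0, T1)
  set G : (Fin N → ℝ) →L[ℝ] (Fin N → ℝ) := LinearMap.toContinuousLinearMap (Matrix.mulVecLin L)
    with hGdef
  have hGapp : ∀ z : Fin N → ℝ, G z = L *ᵥ z := by intro z; simp [hGdef]
  have hbase : X 0 = y (s 0) := by
    rw [hs0]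
    show X 0 = Pm L 0 *ᵥ X 0
    rw [Pm_zero, Matrix.one_mulVec]
  have hA : ∀ t ∈ Set.Ico (0:ℝ) T1, X t = y (s t) := by
    intro t ht
    rcases eq_or_lt_of_le ht.1 with h0 | h0
    · rw [← h0]; exact hbase
    · have htT1 : t < T1 := ht.2
      set C : ℝ := ρ1 + ρ2 * (κ / (T1 - t)) with hCdef
      have hC0 : 0 ≤ C := by
        rw [hCdef]
        have hq : 0 ≤ κ / (T1 - t) := div_nonneg (by linarith) (by linarith)
        nlinarith
      set v : ℝ → (Fin N → ℝ) → (Fin N → ℝ) :=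
        fun τ z => (-(min (ρ1 + ρ2 * gain κ T1 τ) C)) • G z with hvdef
      have hv : ∀ τ, LipschitzWith (Real.toNNReal C * ‖G‖₊) (v τ) := by
        intro τ
        have h0' : 0 ≤ min (ρ1 + ρ2 * gain κ T1 τ) C :=
          le_min (add_nonneg hρ1.le (mul_nonneg hρ2.le (hgain_nonneg τ))) hC0
        exact lipschitz_scaled L h0' (min_le_right _ _)
      have hmin : ∀ τ ∈ Set.Ico (0:ℝ) t,
          min (ρ1 + ρ2 * gain κ T1 τ) C = ρ1 + ρ2 * gain κ T1 τ := by
        intro τ hτ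
        obtain ⟨hτ0, hτt⟩ := hτ
        have hτT1 : τ < T1 := lt_trans hτt htT1
        have hdiv : κ / (T1 - τ) ≤ κ / (T1 - t) :=
          div_le_div_of_nonneg_left (by linarith) (by linarith) (by linarith)
        refine min_eq_left ?_
        rw [hgain_eq τ hτ0 hτT1, hCdef]
        have := mul_le_mul_of_nonneg_left hdiv hρ2.le
        linarith
      have hEq : Set.EqOn X (fun τ => y (s τ)) (Set.Icc 0 t) := by
        refine ODE_solution_unique (v := v) hv hXc.continuousOn ?_ ?_ ?_ hbase
        · intro τ hτ
          have hτT1 : τ < T1 := lt_trans hτ.2 htT1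
          have hd := (hXd τ hτ.1 (ne_of_lt hτT1)).hasDerivWithinAt (s := Set.Ici τ)
          have hveq : v τ (X τ) = (-(ρ1 + ρ2 * gain κ T1 τ)) • (L *ᵥ X τ) := by
            show (-(min (ρ1 + ρ2 * gain κ T1 τ) C)) • G (X τ) = _
            rw [hmin τ hτ, hGapp]
          rw [hveq]
          exact hd
        · intro τ hτ
          exact ((hy_deriv τ (lt_of_le_of_lt hτ.2 htT1)).continuousAt).continuousWithinAt
        · intro τ hτ
          have hτT1 : τ < T1 := lt_trans hτ.2 htT1
          have hd := (hy_deriv τ hτT1).hasDerivWithinAt (s := Set.Ici τ)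
          have hveq : v τ (y (s τ)) = (-(ρ1 + ρ2 * (κ / (T1 - τ)))) • (L *ᵥ y (s τ)) := by
            show (-(min (ρ1 + ρ2 * gain κ T1 τ) C)) • G (y (s τ)) = _
            rw [hmin τ hτ, hGapp, hgain_eq τ hτ.1 hτT1]
          rw [hveq]
          exact hd
      exact hEq (Set.right_mem_Icc.mpr h0.le)
  -- Step B: the value at T1
  have hstop : Tendsto s (nhdsWithin T1 (Set.Iio T1)) atTop := by
    have h1 : Tendsto (fun τ : ℝ => T1 - τ) (nhdsWithin T1 (Set.Iio T1))
        (nhdsWithin 0 (Set.Ioi 0)) := by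
      apply tendsto_nhdsWithin_of_tendsto_nhds_of_eventually_within
      · have h : Tendsto (fun τ : ℝ => T1 - τ) (nhds T1) (nhds (T1 - T1)) :=
          Continuous.tendsto (continuous_const.sub continuous_id) T1
        rw [sub_self] at h
        exact Filter.Tendsto.mono_left h nhdsWithin_le_nhds
      · filter_upwards [self_mem_nhdsWithin] with τ hτ
        exact sub_pos.mpr (Set.mem_Iio.mp hτ)
    have h2 : Tendsto (fun τ : ℝ => Real.log (T1 - τ)) (nhdsWithin T1 (Set.Iio T1)) atBot :=
      Real.tendsto_log_nhdsGT_zero.comp h1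
    have h3 : Tendsto (fun τ : ℝ => -Real.log (T1 - τ)) (nhdsWithin T1 (Set.Iio T1)) atTop :=
      tendsto_neg_atBot_atTop.comp h2
    have h4 : Tendsto (fun τ : ℝ => Real.log T1 - Real.log (T1 - τ))
        (nhdsWithin T1 (Set.Iio T1)) atTop := by
      simp only [sub_eq_add_neg]
      exact tendsto_atTop_add_const_left _ (Real.log T1) h3
    have h5 : Tendsto (fun τ : ℝ => ρ2 * κ * (Real.log T1 - Real.log (T1 - τ)))
        (nhdsWithin T1 (Set.Iio T1)) atTop :=
      Filter.Tendsto.const_mul_atTop (by positivity) h4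
    have h6 : Tendsto (fun τ : ℝ => ρ1 * τ) (nhdsWithin T1 (Set.Iio T1)) (nhds (ρ1 * T1)) :=
      Filter.Tendsto.mono_left ((continuous_const.mul continuous_id).tendsto T1) nhdsWithin_le_nhds
    exact Filter.Tendsto.add_atTop h6 h5
  have hXT1 : X T1 = fun _ => c := by
    have h1 : Tendsto (fun τ => y (s τ)) (nhdsWithin T1 (Set.Iio T1)) (nhds (fun _ => c)) :=
      hctend.comp hstop
    have h2 : (fun τ => y (s τ)) =ᶠ[nhdsWithin T1 (Set.Iio T1)] X := by
      filter_upwards [Ioo_mem_nhdsLT_of_mem (Set.mem_Ioc.mpr ⟨hT1, le_refl T1⟩)] with τ hτ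
      exact (hA τ ⟨hτ.1.le, hτ.2⟩).symm
    have h3 : Tendsto X (nhdsWithin T1 (Set.Iio T1)) (nhds (fun _ => c)) :=
      Filter.Tendsto.congr' h2 h1
    have h4 : Tendsto X (nhdsWithin T1 (Set.Iio T1)) (nhds (X T1)) :=
      Filter.Tendsto.mono_left (hXc.tendsto T1) nhdsWithin_le_nhds
    exact tendsto_nhds_unique h4 h3
  -- Step C: constancy after T1
  refine ⟨c, fun t ht k => ?_⟩
  rcases eq_or_lt_of_le ht with h | h
  · rw [← h, hXT1]
  · have hform : ∀ t0 ∈ Set.Ioo T1 t, X t = Pm L (ρ1 * (t - t0)) *ᵥ X t0 := by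
      intro t0 ht0
      set v2 : ℝ → (Fin N → ℝ) → (Fin N → ℝ) := fun _ z => (-ρ1) • G z with hv2def
      have hv2 : ∀ τ, LipschitzWith (Real.toNNReal ρ1 * ‖G‖₊) (v2 τ) := fun τ =>
        lipschitz_scaled L hρ1.le (le_refl ρ1)
      have hg' : ∀ τ : ℝ, HasDerivAt (fun u => Pm L (ρ1 * (u - t0)) *ᵥ X t0)
          ((-ρ1) • (L *ᵥ (Pm L (ρ1 * (τ - t0)) *ᵥ X t0))) τ := by
        intro τ
        have hσ : HasDerivAt (fun u : ℝ => ρ1 * (u - t0)) (ρ1 * 1) τ :=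
          ((hasDerivAt_id τ).sub_const t0).const_mul ρ1
        have h := hasDerivAt_Pm_comp L (X t0) (fun u => ρ1 * (u - t0)) τ (ρ1 * 1) hσ
        simpa using h
      have hEq : Set.EqOn X (fun u => Pm L (ρ1 * (u - t0)) *ᵥ X t0) (Set.Icc t0 t) := by
        refine ODE_solution_unique (v := v2) hv2 hXc.continuousOn ?_ ?_ ?_ ?_
        · intro τ hτ
          have hτT1 : T1 < τ := lt_of_lt_of_le ht0.1 hτ.1
          have hd := (hXd τ (by linarith) (ne_of_gt hτT1)).hasDerivWithinAt (s := Set.Ici τ)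
          have hg0 : gain κ T1 τ = 0 := by
            unfold gain
            rw [if_neg (fun hh => absurd hh.2 (not_lt.mpr hτT1.le))]
          have hveq : v2 τ (X τ) = (-(ρ1 + ρ2 * gain κ T1 τ)) • (L *ᵥ X τ) := by
            show (-ρ1) • G (X τ) = _
            rw [hGapp, hg0, mul_zero, add_zero]
          rw [hveq]
          exact hd
        · intro τ hτ
          exact ((hg' τ).continuousAt).continuousWithinAt
        · intro τ hτ
          have hveq : v2 τ (Pm L (ρ1 * (τ - t0)) *ᵥ X t0)
              = (-ρ1) • (L *ᵥ (Pm L (ρ1 * (τ - t0)) *ᵥ X t0)) := by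
            show (-ρ1) • G _ = _
            rw [hGapp]
          rw [hveq]
          exact (hg' τ).hasDerivWithinAt
        · show X t0 = Pm L (ρ1 * (t0 - t0)) *ᵥ X t0
          rw [sub_self, mul_zero, Pm_zero, Matrix.one_mulVec]
      exact hEq (Set.right_mem_Icc.mpr ht0.2.le)
    have hcont : Tendsto (fun t0 => Pm L (ρ1 * (t - t0)) *ᵥ X t0) (nhdsWithin T1 (Set.Ioi T1))
        (nhds (Pm L (ρ1 * (t - T1)) *ᵥ X T1)) := by
      have hc1 : Continuous fun t0 : ℝ => Pm L (ρ1 * (t - t0)) *ᵥ X t0 := by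
        apply continuous_pi
        intro k'
        show Continuous fun t0 : ℝ => ∑ l, Pm L (ρ1 * (t - t0)) k' l * X t0 l
        apply continuous_finset_sum
        intro l _
        exact (continuous_Pm_entry L _ (continuous_const.mul (continuous_const.sub continuous_id)) k' l).mul ((continuous_apply l).comp hXc)
      exact Filter.Tendsto.mono_left (hc1.tendsto T1) nhdsWithin_le_nhds
    have hev : (fun t0 => Pm L (ρ1 * (t - t0)) *ᵥ X t0)
        =ᶠ[nhdsWithin T1 (Set.Ioi T1)] (fun _ => X t) := by
      filter_upwards [Ioo_mem_nhdsGT_of_mem (Set.mem_Ico.mpr ⟨le_refl T1, h⟩)] with t0 ht0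
      exact (hform t0 ht0).symm
    have hXt : X t = Pm L (ρ1 * (t - T1)) *ᵥ X T1 :=
      tendsto_nhds_unique tendsto_const_nhds (Filter.Tendsto.congr' hev hcont)
    rw [hXt, hXT1]
    have hcs : (fun _ : Fin N => c) = c • (fun _ : Fin N => (1:ℝ)) := by funext; simp
    rw [hcs, Matrix.mulVec_smul, Pm_mulVec_ones hrow]
    simp
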